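/- Let M be the Motzkin polynomial M(x₁,x₂) = x₁²x₂⁴ + x₁⁴x₂² - 3x₁²x₂² + 1. Then the level set M⁻¹(1) = {x₁ = 0} ∪ {x₂ = 0} ∪ {x₁² + x₂² = 3} is unbounded, hence M is not proper at any sublevel t̄ ≥ 1; while for every t̄ < 1, M is proper at the sublevel t̄ (i.e., the sublevel set {x : M(x) ≤ t̄} is compact). -/

import Mathlib

/-- For the Motzkin polynomial `M`, the level set `M⁻¹(1)` equals
`{x₁ = 0} ∪ {x₂ = 0} ∪ {x₁² + x₂² = 3}` and is unbounded; hence `M` is not proper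
at any sublevel `t̄ ≥ 1`, while for every `t̄ < 1` the map `M` is proper at the
sublevel `t̄` (the sublevel set is compact). -/
theorem stmt_15 (M : ℝ × ℝ → ℝ)
    (hM : ∀ p : ℝ × ℝ,
      M p = p.1 ^ 2 * p.2 ^ 4 + p.1 ^ 4 * p.2 ^ 2 - 3 * p.1 ^ 2 * p.2 ^ 2 + 1) :
    {p : ℝ × ℝ | M p = 1} =
        {p | p.1 = 0} ∪ {p | p.2 = 0} ∪ {p | p.1 ^ 2 + p.2 ^ 2 = 3} ∧
      ¬ Bornology.IsBounded {p : ℝ × ℝ | M p = 1} ∧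
      (∀ tb : ℝ, 1 ≤ tb →
        ∃ A : Set ℝ, IsCompact A ∧ A ⊆ Set.Iic tb ∧ ¬ IsCompact (M ⁻¹' A)) ∧
      (∀ tb : ℝ, tb < 1 →
        (∀ A : Set ℝ, IsCompact A → A ⊆ Set.Iic tb → IsCompact (M ⁻¹' A)) ∧
          IsCompact {p : ℝ × ℝ | M p ≤ tb}) := by
  have hMeq : M = fun p : ℝ × ℝ =>
      p.1 ^ 2 * p.2 ^ 4 + p.1 ^ 4 * p.2 ^ 2 - 3 * p.1 ^ 2 * p.2 ^ 2 + 1 := funext hM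
  have hcont : Continuous M := by rw [hMeq]; fun_prop
  -- level set equality
  have h1 : {p : ℝ × ℝ | M p = 1} =
      {p | p.1 = 0} ∪ {p | p.2 = 0} ∪ {p | p.1 ^ 2 + p.2 ^ 2 = 3} := by
    ext p
    simp only [Set.mem_setOf_eq, Set.mem_union, hM p]
    constructor
    · intro h
      have h' : p.1 ^ 2 * (p.2 ^ 2 * (p.1 ^ 2 + p.2 ^ 2 - 3)) = 0 := by nlinarith
      rcases mul_eq_zero.1 h' with h1 | h'
      · left; left; exact pow_eq_zero_iff (n := 2) (by norm_num) |>.1 h1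
      · rcases mul_eq_zero.1 h' with h2 | h3
        · left; right; exact pow_eq_zero_iff (n := 2) (by norm_num) |>.1 h2
        · right; linarith
    · rintro ((h | h) | h)
      · rw [h]; ring
      · rw [h]; ring
      · linear_combination (p.1 ^ 2 * p.2 ^ 2) * h
  -- unboundedness
  have h2 : ¬ Bornology.IsBounded {p : ℝ × ℝ | M p = 1} := by
    intro hb
    obtain ⟨C, hC⟩ := (isBounded_iff_forall_norm_le).1 hb
    obtain ⟨t, ht0, htC⟩ : ∃ t : ℝ, 0 ≤ t ∧ C < t :=
      ⟨max C 0 + 1, by positivity, by have := le_max_left C 0; linarith⟩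
    have hmem : ((0 : ℝ), t) ∈ {p : ℝ × ℝ | M p = 1} := by
      simp only [Set.mem_setOf_eq, hM]; ring
    have hle := hC _ hmem
    have hnorm : ‖((0 : ℝ), t)‖ = t := by
      rw [Prod.norm_def, norm_zero, Real.norm_eq_abs, abs_of_nonneg ht0,
        max_eq_right ht0]
    rw [hnorm] at hle
    linarith
  refine ⟨h1, h2, ?_, ?_⟩
  · intro tb htb
    refine ⟨{1}, isCompact_singleton, by simpa using htb, ?_⟩
    intro hc
    exact h2 hc.isBounded
  · intro tb htb
    have hsub : IsCompact {p : ℝ × ℝ | M p ≤ tb} := by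
      apply Metric.isCompact_of_isClosed_isBounded
      · exact isClosed_le (by fun_prop) continuous_const
      · rw [isBounded_iff_forall_norm_le]
        refine ⟨2, fun p hp => ?_⟩
        simp only [Set.mem_setOf_eq, hM] at hp
        have hx : p.1 ^ 2 + p.2 ^ 2 ≤ 3 := by nlinarith [sq_nonneg (p.1 * p.2), sq_nonneg p.1, sq_nonneg p.2]
        rw [Prod.norm_def]
        have h1 : |p.1| ≤ 2 := by
          rw [abs_le]; constructor <;> nlinarith [sq_nonneg p.2]
        have h2 : |p.2| ≤ 2 := by
          rw [abs_le]; constructor <;> nlinarith [sq_nonneg p.1]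
        simp [Real.norm_eq_abs]
        exact ⟨h1, h2⟩
    refine ⟨fun A hA hAsub => ?_, hsub⟩
    exact hsub.of_isClosed_subset (hA.isClosed.preimage hcont)
      (fun p hp => hAsub hp)
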